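/- arXiv:1106.4927 — 2 statements merged into one kernel-verified Lean document; each statement's English description precedes it below -/
import Mathlib

section
/- Let P be a set of n > 2 points drawn independently and uniformly at random from a unit disk (a disk in ℝ² of area 1). Set α = (1 − e^{−1/16})(1 − e^{−1/32})e^{−1} and L = ln(α/ε) / ( n − 2 + ln(α/ε) ), and assume 0 < ε ≤ α/e² and that ρ₁ defined by V₂(ρ₁) = L satisfies V₂(ρ₁) ≤ 1/2 − 1/n. Then with probability at least ε there exist points a, b ∈ P forming a Delaunay edge with d(a,b) ≥ ( L / (2√π) )^{1/3}. -/
/-!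
STATEMENT 10: Lower bound in a unit disk (closed disk in `ℝ²` of area 1, radius
`1/√π`): for `n > 2` i.i.d. uniform points, with
`α = (1-e^{-1/16})(1-e^{-1/32})e^{-1}`, `L = ln(α/ε)/(n-2+ln(α/ε))`, and `ρ₁`
with `V₂(ρ₁) = L`, for every `0 < ε ≤ α/e²` such that `V₂(ρ₁) ≤ 1/2 - 1/n`,
with probability at least `ε` there is a Delaunay edge between points
`a, b ∈ P` with `d(a,b) ≥ (L/(2√π))^{1/3}`.

`V₂(x)` (`ballCapVol 2 (1/√π) x`) is the area of the (smaller) circular segment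
of the unit disk whose base chord has length `x`.
-/

noncomputable section

open MeasureTheory ProbabilityTheory Real

local notation "⟪" x ", " y "⟫" => @inner ℝ _ _ x y

/-- `a` and `b` form a Delaunay edge of the point set `P`: there is a disk `B'`
with `a` and `b` on its boundary circle and no point of `P` in its interior. -/
def IsDelaunayEdge {m : ℕ} (P : Set (EuclideanSpace ℝ (Fin m)))
    (a b : EuclideanSpace ℝ (Fin m)) : Prop :=
  ∃ (z : EuclideanSpace ℝ (Fin m)) (s : ℝ),
    a ∈ Metric.sphere z s ∧ b ∈ Metric.sphere z s ∧ ∀ p ∈ P, p ∉ Metric.ball z s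

/-- `V_m(x)`: the volume of the (smaller) cap of the ball of radius `R` centered at
the origin in `ℝ^m` whose base has diameter `x`. -/
def ballCapVol (m : ℕ) [NeZero m] (R x : ℝ) : ℝ :=
  (volume {p : EuclideanSpace ℝ (Fin m) | p ∈ Metric.closedBall 0 R ∧
      Real.sqrt (R ^ 2 - x ^ 2 / 4) ≤ ⟪EuclideanSpace.single (0 : Fin m) (1 : ℝ), p⟫}).toReal

abbrev E2 := EuclideanSpace ℝ (Fin 2)

lemma core_ineq (r₀ h₁ W G a0 a1 b0 b1 D Δ T yz : ℝ)
    (hr : 0 < r₀) (hh0 : 0 ≤ h₁) (hhr : h₁ < r₀)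
    (hW : W^2 = r₀^2 - h₁^2) (hW0 : 0 < W)
    (hG0 : 0 < G) (hGr : G + h₁ ≤ r₀)
    (ha0 : h₁ + 5*G/7 ≤ a0) (ha0' : a0 ≤ h₁ + G)
    (hb0 : h₁ + 5*G/7 ≤ b0) (hb0' : b0 ≤ h₁ + G)
    (ha1 : -(3*W/4) ≤ a1) (ha1' : a1 ≤ -(W/2))
    (hb1 : W/2 ≤ b1) (hb1' : b1 ≤ 3*W/4)
    (hD : D = b1 - a1) (hΔ : Δ = b0 - a0)
    (hT : 4*G*T = 7*D^2)
    (hyz : 2*D*yz = D*(a1+b1) - Δ*(2*T-a0-b0)) :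
    (T - b0)^2 + (yz - b1)^2 = (T - a0)^2 + (yz - a1)^2 ∧
      (T - a0)^2 + (yz - a1)^2 ≤ (T - h₁)^2 ∧ h₁ ≤ T := by
  have hD1 : W ≤ D := by rw [hD]; linarith
  have hD0 : 0 < D := lt_of_lt_of_le hW0 hD1
  have hW2D : W^2 ≤ D^2 := pow_le_pow_left₀ hW0.le hD1 2
  have hGr0 : G * r₀ ≤ W^2 := by
    have h1 : G ≤ r₀ - h₁ := by linarith
    have h2 : r₀ ≤ r₀ + h₁ := by linarith
    have h3 := mul_le_mul h1 h2 hr.le (by linarith : (0:ℝ) ≤ r₀ - h₁)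
    linarith [h3, hW]
  have hGT4 : 7*(G*r₀) ≤ 4*(G*T) := by linarith [hGr0, hW2D, hT]
  have hTr : 7*r₀/4 ≤ T := by
    have h' : G*(7*r₀/4) ≤ G*T := by linarith
    exact (mul_le_mul_iff_right₀ hG0).mp h'
  have hrT : r₀ ≤ T := by linarith
  refine ⟨?_, ?_, by linarith⟩
  · linear_combination (-1 : ℝ)*hyz + (2*yz-a1-b1)*hD + (2*T-a0-b0)*hΔ
  · have hΔub : Δ ≤ 2*G/7 := by rw [hΔ]; linarith
    have hΔlb : -(2*G/7) ≤ Δ := by rw [hΔ]; linarith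
    have hX0 : 0 ≤ 2*T - a0 - b0 := by linarith
    have hX2T : 2*T - a0 - b0 ≤ 2*T := by linarith
    have hgt2 : (2*G/7)*(2*T) = D^2 := by linarith [hT]
    have h5 : Δ*(2*T-a0-b0) ≤ (2*G/7)*(2*T-a0-b0) := mul_le_mul_of_nonneg_right hΔub hX0
    have h6 : (2*G/7)*(2*T-a0-b0) ≤ (2*G/7)*(2*T) :=
      mul_le_mul_of_nonneg_left hX2T (by positivity)
    have hVub : Δ*(2*T-a0-b0) ≤ D^2 := by linarith
    have h7 : (-(2*G/7))*(2*T-a0-b0) ≤ Δ*(2*T-a0-b0) := mul_le_mul_of_nonneg_right hΔlb hX0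
    have h8 : (-(2*G/7))*(2*T) ≤ (-(2*G/7))*(2*T-a0-b0) :=
      mul_le_mul_of_nonpos_left hX2T (by linarith : (-(2*G/7)) ≤ 0)
    have hVlb : -(D^2) ≤ Δ*(2*T-a0-b0) := by linarith
    have e1 : 2*D*(yz-a1) = D^2 - Δ*(2*T-a0-b0) := by linear_combination hyz - D*hD
    have hv : 0 ≤ (D^2 + Δ*(2*T-a0-b0))*(3*D^2 - Δ*(2*T-a0-b0)) :=
      mul_nonneg (by linarith) (by linarith [sq_nonneg D])
    have hid : 4*D^2*(D^2 - (yz-a1)^2) =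
        (D^2 + Δ*(2*T-a0-b0))*(3*D^2 - Δ*(2*T-a0-b0)) := by
      linear_combination (-(2*D*(yz-a1)+D^2-Δ*(2*T-a0-b0)))*e1
    have h10 : 0 ≤ 4*D^2*(D^2 - (yz-a1)^2) := hid ▸ hv
    have hyzsq : (yz - a1)^2 ≤ D^2 := by
      have h4D : (0:ℝ) < 4*D^2 := by positivity
      have := (mul_nonneg_iff_of_pos_left h4D).mp h10
      linarith
    have hstep : D^2 ≤ (T-h₁)^2 - (T-a0)^2 := by
      have expand : (T-h₁)^2 - (T-a0)^2 = (a0-h₁)*(2*T-h₁-a0) := by ring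
      rw [expand]
      have h1 : 5*G/7 ≤ a0 - h₁ := by linarith
      have h2 : 2*T - 2*r₀ ≤ 2*T - h₁ - a0 := by linarith
      have h3 : 0 ≤ 2*T - 2*r₀ := by linarith
      have hmm : (5*G/7)*(2*T-2*r₀) ≤ (a0-h₁)*(2*T-h₁-a0) :=
        mul_le_mul h1 h2 h3 (by linarith)
      have h9 : 4*(G*T) = 7*D^2 := by linarith [hT]
      linarith [hmm, hGr0, hW2D, h9]
    linarith

lemma dist_E2 (a z : E2) : dist a z = Real.sqrt ((a 0 - z 0)^2 + (a 1 - z 1)^2) := by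
  rw [EuclideanSpace.dist_eq]
  simp [Fin.sum_univ_two, Real.dist_eq, sq_abs]

lemma geom_main (r₀ h₁ W G : ℝ) (hr : 0 < r₀) (hh0 : 0 ≤ h₁) (hhr : h₁ < r₀)
    (hWdef : W = Real.sqrt (r₀^2 - h₁^2))
    (hGdef : G = Real.sqrt (r₀^2 - 9*W^2/16) - h₁)
    (a b : E2)
    (ha0 : h₁ + 5*G/7 ≤ a 0) (ha0' : a 0 ≤ h₁ + G)
    (hb0 : h₁ + 5*G/7 ≤ b 0) (hb0' : b 0 ≤ h₁ + G)
    (ha1 : -(3*W/4) ≤ a 1) (ha1' : a 1 ≤ -(W/2))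
    (hb1 : W/2 ≤ b 1) (hb1' : b 1 ≤ 3*W/4) :
    ∃ z s, a ∈ Metric.sphere z s ∧ b ∈ Metric.sphere z s ∧
      ∀ p : E2, p 0 < h₁ → p ∉ Metric.ball z s := by
  have hsub : (0:ℝ) ≤ r₀^2 - h₁^2 := by nlinarith
  have hW : W^2 = r₀^2 - h₁^2 := by rw [hWdef, sq_sqrt hsub]
  have hW0 : 0 < W := by rw [hWdef]; exact Real.sqrt_pos.mpr (by nlinarith)
  have hsub2 : (0:ℝ) ≤ r₀^2 - 9*W^2/16 := by rw [hW]; nlinarith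
  have hG : (G + h₁)^2 = r₀^2 - 9*W^2/16 := by
    rw [hGdef, sub_add_cancel, sq_sqrt hsub2]
  have hG0 : 0 < G := by
    rw [hGdef, sub_pos]
    apply (Real.lt_sqrt hh0).mpr
    nlinarith [hW]
  have hGr : G + h₁ ≤ r₀ := by
    rw [hGdef, sub_add_cancel]
    calc Real.sqrt (r₀^2 - 9*W^2/16) ≤ Real.sqrt (r₀^2) :=
          Real.sqrt_le_sqrt (by nlinarith)
      _ = r₀ := Real.sqrt_sq hr.le
  have hD0 : (0:ℝ) < b 1 - a 1 := by linarith
  obtain ⟨D, hDdef⟩ : ∃ D : ℝ, D = b 1 - a 1 := ⟨_, rfl⟩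
  obtain ⟨Δ, hΔdef⟩ : ∃ Δ : ℝ, Δ = b 0 - a 0 := ⟨_, rfl⟩
  obtain ⟨T, hTdef⟩ : ∃ T : ℝ, T = 7*D^2/(4*G) := ⟨_, rfl⟩
  obtain ⟨yz, hyzdef⟩ : ∃ yz : ℝ, yz = (D*(a 1 + b 1) - Δ*(2*T - a 0 - b 0))/(2*D) := ⟨_, rfl⟩
  rw [hDdef] at hyzdef hTdef
  have hTeq : 4*G*T = 7*(b 1 - a 1)^2 := by
    rw [hTdef]; field_simp
  have hyzeq : 2*(b 1 - a 1)*yz = (b 1 - a 1)*(a 1 + b 1) - Δ*(2*T - a 0 - b 0) := by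
    rw [hyzdef]; field_simp
  obtain ⟨heq, hle, hhT⟩ := core_ineq r₀ h₁ W G (a 0) (a 1) (b 0) (b 1) (b 1 - a 1) Δ T yz
    hr hh0 hhr hW hW0 hG0 hGr ha0 ha0' hb0 hb0' ha1 ha1' hb1 hb1' rfl hΔdef hTeq hyzeq
  obtain ⟨z, hzdef⟩ : ∃ z : E2, z = (WithLp.equiv 2 (Fin 2 → ℝ)).symm ![T, yz] := ⟨_, rfl⟩
  have hz0 : z 0 = T := by rw [hzdef]; rfl
  have hz1 : z 1 = yz := by rw [hzdef]; rfl
  obtain ⟨s, hsdef⟩ : ∃ s : ℝ, s = Real.sqrt ((T - a 0)^2 + (yz - a 1)^2) := ⟨_, rfl⟩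
  have hs0 : 0 ≤ s := hsdef ▸ Real.sqrt_nonneg _
  refine ⟨z, s, ?_, ?_, ?_⟩
  · rw [Metric.mem_sphere, dist_E2, hz0, hz1, hsdef]
    congr 1; ring
  · rw [Metric.mem_sphere, dist_E2, hz0, hz1, hsdef]
    rw [show (b 0 - T)^2 + (b 1 - yz)^2 = (T - b 0)^2 + (yz - b 1)^2 by ring, heq]
  · intro p hp
    rw [Metric.mem_ball, not_lt, dist_E2, hz0, hz1, hsdef]
    apply Real.sqrt_le_sqrt
    have h2 : 0 ≤ T - h₁ := by linarith
    have h3 : T - h₁ ≤ T - p 0 := by linarith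
    have h1 : (T - h₁)^2 ≤ (p 0 - T)^2 := by
      calc (T - h₁)^2 ≤ (T - p 0)^2 := pow_le_pow_left₀ h2 h3 2
        _ = (p 0 - T)^2 := by ring
    linarith [hle, h1, sq_nonneg (p 1 - yz)]

lemma mem_cB_iff {r : ℝ} (hr : 0 ≤ r) (p : E2) :
    p ∈ Metric.closedBall (0:E2) r ↔ p 0^2 + p 1^2 ≤ r^2 := by
  rw [Metric.mem_closedBall, dist_E2]
  have h0 : (0:E2) 0 = 0 := rfl
  have h1 : (0:E2) 1 = 0 := rfl
  rw [h0, h1, sub_zero, sub_zero]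
  constructor
  · intro h
    nlinarith [Real.sq_sqrt (by positivity : (0:ℝ) ≤ p 0^2 + p 1^2),
      Real.sqrt_nonneg (p 0^2 + p 1^2)]
  · intro h
    rw [show r = Real.sqrt (r^2) from (Real.sqrt_sq hr).symm]
    exact Real.sqrt_le_sqrt h

lemma measurable_coord (i : Fin 2) : Measurable (fun p : E2 => p i) :=
  (EuclideanSpace.proj i).continuous.measurable

lemma measurableSet_rect (s t : Set ℝ) (hs : MeasurableSet s) (ht : MeasurableSet t) :
    MeasurableSet {p : E2 | p 0 ∈ s ∧ p 1 ∈ t} :=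
  ((measurable_coord 0) hs).inter ((measurable_coord 1) ht)

lemma vol_pi_rect (s t : Set ℝ) :
    volume {f : Fin 2 → ℝ | f 0 ∈ s ∧ f 1 ∈ t} = volume s * volume t := by
  have : {f : Fin 2 → ℝ | f 0 ∈ s ∧ f 1 ∈ t} = Set.pi Set.univ ![s, t] := by
    ext f; simp [Fin.forall_fin_two]
  rw [this, volume_pi_pi]
  simp [Fin.prod_univ_two]

lemma vol_rect (s t : Set ℝ) (hs : MeasurableSet s) (ht : MeasurableSet t) :
    volume {p : E2 | p 0 ∈ s ∧ p 1 ∈ t} = volume s * volume t := by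
  have hmeas : MeasurableSet {f : Fin 2 → ℝ | f 0 ∈ s ∧ f 1 ∈ t} :=
    ((measurable_pi_apply 0) hs).inter ((measurable_pi_apply 1) ht)
  have h1 : {p : E2 | p 0 ∈ s ∧ p 1 ∈ t} =
      (MeasurableEquiv.toLp 2 (Fin 2 → ℝ)).symm ⁻¹' {f : Fin 2 → ℝ | f 0 ∈ s ∧ f 1 ∈ t} := rfl
  rw [h1, MeasurePreserving.measure_preimage
    (EuclideanSpace.volume_preserving_symm_measurableEquiv_toLp (ι := Fin 2)) hmeas.nullMeasurableSet]
  exact vol_pi_rect s t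

lemma vol_cB : volume (Metric.closedBall (0:E2) (1/Real.sqrt π)) = 1 := by
  rw [EuclideanSpace.volume_closedBall]
  have hπ : (0:ℝ) ≤ π := pi_pos.le
  simp only [Fintype.card_fin]
  rw [show ((2:ℕ):ℝ)/2 + 1 = 2 by norm_num, Real.Gamma_two]
  rw [← ENNReal.ofReal_pow (by positivity), ← ENNReal.ofReal_mul (by positivity)]
  rw [show (1/Real.sqrt π)^2 * (Real.sqrt π ^ 2 / 1) = 1 by
    rw [Real.sq_sqrt hπ]; field_simp; rw [Real.sq_sqrt hπ]]
  exact ENNReal.ofReal_one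

lemma coord_le_dist (a b : E2) : |a 1 - b 1| ≤ dist a b := by
  rw [dist_E2, show |a 1 - b 1| = Real.sqrt ((a 1 - b 1)^2) from (Real.sqrt_sq_eq_abs _).symm]
  exact Real.sqrt_le_sqrt (by nlinarith [sq_nonneg (a 0 - b 0)])

/-! ### Main theorem -/

lemma abs_le_of_sq_le_sq'' (x y : ℝ) (h : x^2 ≤ y^2) (hy : 0 ≤ y) : -y ≤ x ∧ x ≤ y := by
  have h1 := Real.sqrt_le_sqrt h
  rw [Real.sqrt_sq_eq_abs, Real.sqrt_sq hy] at h1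
  exact abs_le.mp h1

set_option maxHeartbeats 1000000 in
theorem delaunay_disk_lower_bound_explicit
    (n : ℕ) (hn : 2 < n)
    {Ω : Type} [MeasureSpace Ω] [IsProbabilityMeasure (ℙ : Measure Ω)]
    -- the points `X 0, …, X (n-1)` are i.i.d., uniform in the unit disk
    (X : Fin n → Ω → EuclideanSpace ℝ (Fin 2))
    (hmeas : ∀ i, Measurable (X i))
    (hindep : iIndepFun X ℙ)
    (hdist : ∀ i, Measure.map (X i) ℙ =
      volume.restrict (Metric.closedBall (0 : EuclideanSpace ℝ (Fin 2)) (1 / Real.sqrt π)))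
    (α ε L ρ₁ : ℝ)
    (hα : α = (1 - Real.exp (-(1 / 16 : ℝ))) * (1 - Real.exp (-(1 / 32 : ℝ))) * Real.exp (-1))
    (hε0 : 0 < ε) (hε1 : ε ≤ α / Real.exp 1 ^ 2)
    (hL : L = Real.log (α / ε) / ((n : ℝ) - 2 + Real.log (α / ε)))
    (hρ₁ : ballCapVol 2 (1 / Real.sqrt π) ρ₁ = L)
    (hsmall : ballCapVol 2 (1 / Real.sqrt π) ρ₁ ≤ 1 / 2 - 1 / (n : ℝ)) :
    ENNReal.ofReal ε ≤
      ℙ {ω | ∃ i j : Fin n, i ≠ j ∧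
        IsDelaunayEdge (Set.range fun k => X k ω) (X i ω) (X j ω) ∧
        (L / (2 * Real.sqrt π)) ^ ((1 : ℝ) / 3) ≤ dist (X i ω) (X j ω)} := by
  have hπ : (0:ℝ) < Real.sqrt π := Real.sqrt_pos.mpr pi_pos
  obtain ⟨r₀, hr₀def⟩ : ∃ r : ℝ, r = 1 / Real.sqrt π := ⟨_, rfl⟩
  rw [← hr₀def] at hdist hρ₁ hsmall
  have hr : 0 < r₀ := by rw [hr₀def]; positivity
  -- α facts
  have hα1 : 0 < 1 - Real.exp (-(1/16 : ℝ)) := by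
    have h := Real.exp_lt_one_iff.mpr (show -(1/16:ℝ) < 0 by norm_num)
    linarith only [h]
  have hα2 : 0 < 1 - Real.exp (-(1/32 : ℝ)) := by
    have h := Real.exp_lt_one_iff.mpr (show -(1/32:ℝ) < 0 by norm_num)
    linarith only [h]
  have hα0 : 0 < α := by
    rw [hα]; exact mul_pos (mul_pos hα1 hα2) (Real.exp_pos _)
  have hαub : α ≤ 1/1280 := by
    have e1 : 1 - Real.exp (-(1/16:ℝ)) ≤ 1/16 := by
      have h := Real.add_one_le_exp (-(1/16:ℝ)); linarith only [h]
    have e2 : 1 - Real.exp (-(1/32:ℝ)) ≤ 1/32 := by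
      have h := Real.add_one_le_exp (-(1/32:ℝ)); linarith only [h]
    have e3 : Real.exp (-1:ℝ) ≤ 2/5 := by
      have h5 : (5/2:ℝ) ≤ Real.exp 1 := by
        have h := Real.exp_one_gt_d9; linarith only [h]
      rw [Real.exp_neg, show (2/5 : ℝ) = (5/2 : ℝ)⁻¹ by norm_num]
      exact inv_anti₀ (by norm_num) h5
    calc α ≤ (1/16) * (1/32) * (2/5) := by
          rw [hα]
          exact mul_le_mul (mul_le_mul e1 e2 hα2.le (by norm_num)) e3 (Real.exp_pos _).le
            (by norm_num)
      _ ≤ 1/1280 := by norm_num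
  -- t facts
  obtain ⟨t, htdef⟩ : ∃ t : ℝ, t = Real.log (α / ε) := ⟨_, rfl⟩
  rw [← htdef] at hL
  have hαε0 : 0 < α/ε := div_pos hα0 hε0
  have hexp2 : Real.exp 2 ≤ α/ε := by
    rw [le_div_iff₀ hε0]
    have h1 : Real.exp 2 = Real.exp 1 ^ 2 := by
      rw [sq, ← Real.exp_add]; norm_num
    have h2 := (le_div_iff₀ (by positivity : (0:ℝ) < Real.exp 1 ^ 2)).mp hε1
    rw [h1]; linarith only [h2]
  have ht2 : (2:ℝ) ≤ t := by
    rw [htdef]; exact (Real.le_log_iff_exp_le hαε0).mpr hexp2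
  have hexp : Real.exp (-t) = ε/α := by
    rw [htdef, Real.exp_neg, Real.exp_log hαε0, inv_div]
  have hn2R : (2:ℝ) < (n:ℝ) := by exact_mod_cast hn
  have hnpos : (0:ℝ) < (n:ℝ) := by linarith only [hn2R]
  have hden : 0 < (n:ℝ) - 2 + t := by linarith only [hn2R, ht2]
  have hL0 : 0 < L := by
    rw [hL]; exact div_pos (by linarith only [ht2]) hden
  have hL2n : 2/(n:ℝ) ≤ L := by
    rw [hL, div_le_div_iff₀ hnpos hden]
    have hprod := mul_nonneg (show (0:ℝ) ≤ t - 2 by linarith only [ht2])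
      (show (0:ℝ) ≤ (n:ℝ) - 2 by linarith only [hn2R])
    nlinarith only [hprod]
  have hLsm : L ≤ 1/2 - 1/(n:ℝ) := hρ₁ ▸ hsmall
  have hn6 : (6:ℝ) ≤ (n:ℝ) := by
    have h3n : 3/(n:ℝ) ≤ 1/2 := by
      have heq : 2/(n:ℝ) + 1/(n:ℝ) = 3/(n:ℝ) := by ring
      linarith only [hLsm, hL2n, heq]
    rw [div_le_div_iff₀ hnpos (by norm_num : (0:ℝ) < 2)] at h3n
    linarith only [h3n]
  have h1L : 0 < 1 - L := by
    have hinv : (0:ℝ) < 1/(n:ℝ) := by positivity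
    linarith only [hLsm, hinv]
  have hpow : Real.exp (-t) ≤ (1 - L)^(n-2) := by
    have hn2' : (0:ℝ) < (n:ℝ) - 2 := by linarith only [hn2R]
    have h1 : 1 - L = ((n:ℝ)-2)/((n:ℝ)-2+t) := by
      rw [hL]; field_simp; ring
    have h2 : ((n:ℝ)-2+t)/((n:ℝ)-2) ≤ Real.exp (t/((n:ℝ)-2)) := by
      have ha := Real.add_one_le_exp (t/((n:ℝ)-2))
      have heq : ((n:ℝ)-2+t)/((n:ℝ)-2) = t/((n:ℝ)-2) + 1 := by field_simp; ring
      rw [heq]; exact ha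
    have h3 : Real.exp (-(t/((n:ℝ)-2))) ≤ 1 - L := by
      rw [h1, Real.exp_neg]
      have hpos : (0:ℝ) < ((n:ℝ)-2+t)/((n:ℝ)-2) := div_pos hden hn2'
      calc (Real.exp (t/((n:ℝ)-2)))⁻¹ ≤ (((n:ℝ)-2+t)/((n:ℝ)-2))⁻¹ :=
            inv_anti₀ hpos h2
        _ = ((n:ℝ)-2)/((n:ℝ)-2+t) := by rw [inv_div]
    have hNcast : ((n - 2 : ℕ) : ℝ) = (n:ℝ) - 2 := by
      have h2n : (2:ℕ) ≤ n := by omega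
      push_cast [Nat.cast_sub h2n]
      ring
    calc Real.exp (-t) = (Real.exp (-(t/((n:ℝ)-2))))^(n-2) := by
          rw [← Real.exp_nat_mul]
          congr 1
          rw [hNcast]
          field_simp
      _ ≤ (1-L)^(n-2) := pow_le_pow_left₀ (Real.exp_pos _).le h3 _
  -- geometry scalars
  obtain ⟨h₁, hh₁def⟩ : ∃ h : ℝ, h = Real.sqrt (r₀^2 - ρ₁^2/4) := ⟨_, rfl⟩
  have hh0 : 0 ≤ h₁ := hh₁def ▸ Real.sqrt_nonneg _
  have hh1r : h₁ ≤ r₀ := by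
    rw [hh₁def]
    calc Real.sqrt (r₀^2 - ρ₁^2/4) ≤ Real.sqrt (r₀^2) :=
          Real.sqrt_le_sqrt (by linarith only [sq_nonneg ρ₁])
      _ = r₀ := Real.sqrt_sq hr.le
  have hsqh : h₁^2 ≤ r₀^2 := pow_le_pow_left₀ hh0 hh1r 2
  obtain ⟨W, hWdef⟩ : ∃ w : ℝ, w = Real.sqrt (r₀^2 - h₁^2) := ⟨_, rfl⟩
  have hW0' : 0 ≤ W := hWdef ▸ Real.sqrt_nonneg _
  have hWsq : W^2 = r₀^2 - h₁^2 := by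
    rw [hWdef, Real.sq_sqrt (by linarith only [hsqh])]
  obtain ⟨C, hCdef⟩ : ∃ C : Set E2,
      C = {p : E2 | p ∈ Metric.closedBall (0:E2) r₀ ∧ h₁ ≤ p 0} := ⟨_, rfl⟩
  have hCm : MeasurableSet C := by
    rw [hCdef]
    exact measurableSet_closedBall.inter ((measurable_coord 0) measurableSet_Ici)
  have hCvol : (volume C).toReal = L := by
    rw [← hρ₁]
    unfold ballCapVol
    congr 2
    rw [hCdef]
    ext p
    simp [EuclideanSpace.inner_single_left, hh₁def]
  -- upper bound for L
  have hrect : C ⊆ {p : E2 | p 0 ∈ Set.Icc h₁ r₀ ∧ p 1 ∈ Set.Icc (-W) W} := by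
    rw [hCdef]
    rintro p ⟨hpB, hp0⟩
    have hpc := (mem_cB_iff hr.le p).mp hpB
    have hp0sq : h₁^2 ≤ p 0^2 := pow_le_pow_left₀ hh0 hp0 2
    have hp1sq : p 1^2 ≤ W^2 := by linarith only [hpc, hWsq, hp0sq]
    have hp1b := abs_le_of_sq_le_sq'' (p 1) W hp1sq hW0'
    have hp0r : p 0 ≤ r₀ := by
      have hsq : p 0^2 ≤ r₀^2 := by linarith only [hpc, sq_nonneg (p 1)]
      exact (abs_le_of_sq_le_sq'' (p 0) r₀ hsq hr.le).2
    exact ⟨⟨hp0, hp0r⟩, hp1b.1, hp1b.2⟩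
  have hLub : L ≤ (r₀ - h₁)*(2*W) := by
    have h1 : volume C ≤ volume {p : E2 | p 0 ∈ Set.Icc h₁ r₀ ∧ p 1 ∈ Set.Icc (-W) W} :=
      measure_mono hrect
    rw [vol_rect _ _ measurableSet_Icc measurableSet_Icc, Real.volume_Icc, Real.volume_Icc,
      ← ENNReal.ofReal_mul (by linarith only [hh1r])] at h1
    have h2 := ENNReal.toReal_mono ENNReal.ofReal_ne_top h1
    rw [hCvol, ENNReal.toReal_ofReal (mul_nonneg (by linarith only [hh1r])
      (by linarith only [hW0']))] at h2
    calc L ≤ (r₀ - h₁) * (W - -W) := h2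
      _ = (r₀ - h₁)*(2*W) := by ring
  have hh1r' : h₁ < r₀ := by
    by_contra hcon
    have heq : h₁ = r₀ := le_antisymm hh1r (not_lt.mp hcon)
    have hWz : W = 0 := by
      rw [hWdef, heq]
      simp
    rw [heq, hWz] at hLub
    norm_num at hLub
    linarith only [hL0, hLub]
  have hW0 : 0 < W := by
    rw [hWdef]
    apply Real.sqrt_pos.mpr
    have hprod := mul_pos (show (0:ℝ) < r₀ - h₁ by linarith only [hh1r'])
      (show (0:ℝ) < r₀ + h₁ by linarith only [hh0, hr])
    nlinarith only [hprod]
  obtain ⟨G, hGdef⟩ : ∃ g : ℝ, g = Real.sqrt (r₀^2 - 9*W^2/16) - h₁ := ⟨_, rfl⟩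
  have hGsum : (G + h₁)^2 = r₀^2 - 9*W^2/16 := by
    rw [hGdef, sub_add_cancel, Real.sq_sqrt (by
      linarith only [hWsq, sq_nonneg h₁, sq_nonneg r₀])]
  have hG0 : 0 < G := by
    rw [hGdef, sub_pos]
    apply (Real.lt_sqrt hh0).mpr
    have hWsqpos : 0 < W^2 := pow_pos hW0 2
    linarith only [hWsq, hWsqpos]
  have hGr : G + h₁ ≤ r₀ := by
    rw [hGdef, sub_add_cancel]
    calc Real.sqrt (r₀^2 - 9*W^2/16) ≤ Real.sqrt (r₀^2) :=
          Real.sqrt_le_sqrt (by linarith only [sq_nonneg W])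
      _ = r₀ := Real.sqrt_sq hr.le
  have hG716 : 7/16*(r₀ - h₁) ≤ G := by
    have h1 : ((9*h₁ + 7*r₀)/16)^2 ≤ (G + h₁)^2 := by
      nlinarith only [hGsum, hWsq, sq_nonneg (r₀ - h₁)]
    have hGh : (0:ℝ) ≤ G + h₁ := by linarith only [hh0, hG0]
    have h2 := (abs_le_of_sq_le_sq'' ((9*h₁ + 7*r₀)/16) (G + h₁) h1 hGh).2
    linarith only [h2]
  -- A, B, D0
  obtain ⟨A, hAdef⟩ : ∃ A : Set E2, A = {p : E2 | p 0 ∈ Set.Icc (h₁+5*G/7) (h₁+G) ∧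
      p 1 ∈ Set.Icc (-(3*W/4)) (-(W/2))} := ⟨_, rfl⟩
  obtain ⟨B, hBdef⟩ : ∃ B : Set E2, B = {p : E2 | p 0 ∈ Set.Icc (h₁+5*G/7) (h₁+G) ∧
      p 1 ∈ Set.Icc (W/2) (3*W/4)} := ⟨_, rfl⟩
  have hAm : MeasurableSet A := hAdef ▸ measurableSet_rect _ _ measurableSet_Icc measurableSet_Icc
  have hBm : MeasurableSet B := hBdef ▸ measurableSet_rect _ _ measurableSet_Icc measurableSet_Icc
  have hAC : A ⊆ C := by
    rw [hAdef, hCdef]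
    rintro p ⟨⟨h01, h02⟩, h11, h12⟩
    refine ⟨(mem_cB_iff hr.le p).mpr ?_, by linarith only [h01, hh0, hG0]⟩
    have hp0 : 0 ≤ p 0 := by linarith only [h01, hh0, hG0]
    have hsq0 : p 0 ^2 ≤ (h₁+G)^2 := pow_le_pow_left₀ hp0 h02 2
    have hneg : (0:ℝ) ≤ -(p 1) := by linarith only [h12, hW0]
    have hle34 : -(p 1) ≤ 3*W/4 := by linarith only [h11]
    have hsq1' : (-(p 1))^2 ≤ (3*W/4)^2 := pow_le_pow_left₀ hneg hle34 2
    have hsq1 : p 1 ^2 ≤ 9*W^2/16 := by nlinarith only [hsq1']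
    linarith only [hsq0, hsq1, hGsum]
  have hBC : B ⊆ C := by
    rw [hBdef, hCdef]
    rintro p ⟨⟨h01, h02⟩, h11, h12⟩
    refine ⟨(mem_cB_iff hr.le p).mpr ?_, by linarith only [h01, hh0, hG0]⟩
    have hp0 : 0 ≤ p 0 := by linarith only [h01, hh0, hG0]
    have hsq0 : p 0 ^2 ≤ (h₁+G)^2 := pow_le_pow_left₀ hp0 h02 2
    have hpos : (0:ℝ) ≤ p 1 := by linarith only [h11, hW0]
    have hsq1' : (p 1)^2 ≤ (3*W/4)^2 := pow_le_pow_left₀ hpos h12 2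
    have hsq1 : p 1 ^2 ≤ 9*W^2/16 := by nlinarith only [hsq1']
    linarith only [hsq0, hsq1, hGsum]
  have hvolA : volume A = ENNReal.ofReal (2*G/7) * ENNReal.ofReal (W/4) := by
    rw [hAdef, vol_rect _ _ measurableSet_Icc measurableSet_Icc, Real.volume_Icc,
      Real.volume_Icc, show (h₁+G)-(h₁+5*G/7) = 2*G/7 by ring,
      show (-(W/2) - -(3*W/4)) = W/4 by ring]
  have hvolB : volume B = ENNReal.ofReal (2*G/7) * ENNReal.ofReal (W/4) := by
    rw [hBdef, vol_rect _ _ measurableSet_Icc measurableSet_Icc, Real.volume_Icc,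
      Real.volume_Icc, show (h₁+G)-(h₁+5*G/7) = 2*G/7 by ring,
      show (3*W/4 - W/2) = W/4 by ring]
  obtain ⟨D0, hD0def⟩ : ∃ D : Set E2, D = Metric.closedBall (0:E2) r₀ \ C := ⟨_, rfl⟩
  have hD0m : MeasurableSet D0 := hD0def ▸ (measurableSet_closedBall.diff hCm)
  have hvolcB : volume (Metric.closedBall (0:E2) r₀) = 1 := by
    rw [hr₀def]; exact vol_cB
  have hCsub : C ⊆ Metric.closedBall (0:E2) r₀ := by
    rw [hCdef]; exact fun p hp => hp.1
  have hCfin : volume C ≠ ⊤ := by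
    have h1 : volume C ≤ volume (Metric.closedBall (0:E2) r₀) := measure_mono hCsub
    rw [hvolcB] at h1
    exact ne_top_of_le_ne_top ENNReal.one_ne_top h1
  have hCvol' : volume C = ENNReal.ofReal L := by
    rw [← hCvol, ENNReal.ofReal_toReal hCfin]
  have hvolD0 : volume D0 = ENNReal.ofReal (1 - L) := by
    rw [hD0def, measure_diff hCsub hCm.nullMeasurableSet hCfin, hvolcB, hCvol',
      ← ENNReal.ofReal_one, ← ENNReal.ofReal_sub _ hL0.le]
  -- lower bound for the rectangle area
  have haA : L/64 ≤ (2*G/7)*(W/4) := by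
    have h1 : (7/16*(r₀-h₁))*(W/4) ≤ G*(W/4) :=
      mul_le_mul_of_nonneg_right hG716 (by linarith only [hW0'])
    nlinarith only [hLub, h1]
  have haA0 : (0:ℝ) < (2*G/7)*(W/4) :=
    mul_pos (by linarith only [hG0]) (by linarith only [hW0])
  -- tau bound
  have hr₀inv : r₀ * Real.sqrt π = 1 := by
    rw [hr₀def]; field_simp
  have hτW : (L/(2*Real.sqrt π))^((1:ℝ)/3) ≤ W := by
    have hmul := mul_nonneg hh0 (show (0:ℝ) ≤ r₀ - h₁ by linarith only [hh1r])
    have hrh : (r₀ - h₁) * r₀ ≤ W^2 := by nlinarith only [hmul, hWsq]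
    have h2 : (r₀ - h₁) ≤ W^2 * Real.sqrt π := by
      calc r₀ - h₁ = ((r₀-h₁)*r₀)*Real.sqrt π := by
            rw [mul_assoc, hr₀inv, mul_one]
        _ ≤ W^2*Real.sqrt π := mul_le_mul_of_nonneg_right hrh hπ.le
    have h1 : L ≤ 2*Real.sqrt π * W^3 := by
      calc L ≤ (r₀-h₁)*(2*W) := hLub
        _ ≤ (W^2*Real.sqrt π)*(2*W) := mul_le_mul_of_nonneg_right h2
            (by linarith only [hW0'])
        _ = 2*Real.sqrt π*W^3 := by ring
    have h3 : L/(2*Real.sqrt π) ≤ W^3 := by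
      rw [div_le_iff₀ (by positivity)]; linarith only [h1]
    calc (L/(2*Real.sqrt π))^((1:ℝ)/3) ≤ (W^3)^((1:ℝ)/3) :=
          Real.rpow_le_rpow (div_nonneg hL0.le (by positivity)) h3 (by norm_num)
      _ = W := by
          rw [← Real.rpow_natCast W 3, ← Real.rpow_mul hW0.le]
          norm_num
  -- events
  obtain ⟨K, hKdef⟩ : ∃ K : Fin n × Fin n → Fin n → Set E2,
      K = fun ij k => if k = ij.1 then A else if k = ij.2 then B else D0 := ⟨_, rfl⟩
  obtain ⟨F, hFdef⟩ : ∃ F : Fin n × Fin n → Set Ω,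
      F = fun ij => ⋂ k, X k ⁻¹' (K ij k) := ⟨_, rfl⟩
  have hKm : ∀ ij k, MeasurableSet (K ij k) := by
    intro ij k
    rw [hKdef]
    dsimp only
    split_ifs
    · exact hAm
    · exact hBm
    · exact hD0m
  have hFm : ∀ ij, MeasurableSet (F ij) := by
    intro ij
    rw [hFdef]
    exact MeasurableSet.iInter (fun k => (hmeas k) (hKm ij k))
  have hXP : ∀ (k : Fin n) (S : Set E2), MeasurableSet S → S ⊆ Metric.closedBall (0:E2) r₀ →
      ℙ (X k ⁻¹' S) = volume S := by
    intro k S hS hsub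
    rw [← Measure.map_apply (hmeas k) hS, hdist k, Measure.restrict_apply hS,
      Set.inter_eq_self_of_subset_left hsub]
  have hD0sub : D0 ⊆ Metric.closedBall (0:E2) r₀ := by
    rw [hD0def]; exact Set.diff_subset
  have hAsub : A ⊆ Metric.closedBall (0:E2) r₀ := hAC.trans hCsub
  have hBsub : B ⊆ Metric.closedBall (0:E2) r₀ := hBC.trans hCsub
  have hPF : ∀ ij ∈ (Finset.univ : Finset (Fin n × Fin n)).filter (fun p => p.1 ≠ p.2),
      ℙ (F ij) = volume A * (volume B * volume D0 ^ (n-2)) := by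
    intro ij hij
    have hne : ij.1 ≠ ij.2 := by
      simpa using (Finset.mem_filter.mp hij).2
    rw [hFdef]
    have hprod := hindep.meas_iInter (fun k => ⟨K ij k, hKm ij k, rfl⟩)
    rw [hprod]
    have hval : ∀ k, ℙ (X k ⁻¹' K ij k) =
        if k = ij.1 then volume A else if k = ij.2 then volume B else volume D0 := by
      intro k
      rw [hKdef]
      dsimp only
      split_ifs
      · exact hXP k A hAm hAsub
      · exact hXP k B hBm hBsub
      · exact hXP k D0 hD0m hD0sub
    rw [Finset.prod_congr rfl (fun k _ => hval k)]
    rw [← Finset.mul_prod_erase Finset.univ _ (Finset.mem_univ ij.1), if_pos rfl]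
    have hjmem : ij.2 ∈ Finset.univ.erase ij.1 :=
      Finset.mem_erase.mpr ⟨hne.symm, Finset.mem_univ _⟩
    rw [← Finset.mul_prod_erase _ _ hjmem, if_neg hne.symm, if_pos rfl]
    have hconst : ∀ k ∈ (Finset.univ.erase ij.1).erase ij.2,
        (if k = ij.1 then volume A else if k = ij.2 then volume B else volume D0)
          = volume D0 := by
      intro k hk
      obtain ⟨hk2, hk1'⟩ := Finset.mem_erase.mp hk
      obtain ⟨hk1, -⟩ := Finset.mem_erase.mp hk1'
      rw [if_neg hk1, if_neg hk2]
    rw [Finset.prod_congr rfl hconst, Finset.prod_const]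
    have hcard : ((Finset.univ.erase ij.1).erase ij.2).card = n - 2 := by
      rw [Finset.card_erase_of_mem hjmem, Finset.card_erase_of_mem (Finset.mem_univ _),
        Finset.card_univ, Fintype.card_fin]
      omega
    rw [hcard]
  -- disjointness
  have hABdisj : ∀ x : E2, x ∈ A → x ∈ B → False := by
    intro x hxA hxB
    rw [hAdef] at hxA
    rw [hBdef] at hxB
    obtain ⟨-, -, h12⟩ := hxA
    obtain ⟨-, h21, -⟩ := hxB
    linarith only [h12, h21, hW0]
  have hADdisj : ∀ x : E2, x ∈ A → x ∈ D0 → False := by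
    intro x hxA hxD
    rw [hD0def] at hxD
    exact hxD.2 (hAC hxA)
  have hBDdisj : ∀ x : E2, x ∈ B → x ∈ D0 → False := by
    intro x hxB hxD
    rw [hD0def] at hxD
    exact hxD.2 (hBC hxB)
  have hdisj : Set.PairwiseDisjoint
      ↑((Finset.univ : Finset (Fin n × Fin n)).filter (fun p => p.1 ≠ p.2)) F := by
    intro p hp q hq hpq
    simp only [Finset.coe_filter, Set.mem_setOf_eq, Finset.mem_univ, true_and] at hp hq
    apply Set.disjoint_left.mpr
    intro ω hωp hωq
    rw [hFdef] at hωp hωq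
    have hmemp : ∀ k, X k ω ∈ K p k := fun k => Set.mem_iInter.mp hωp k
    have hmemq : ∀ k, X k ω ∈ K q k := fun k => Set.mem_iInter.mp hωq k
    rw [hKdef] at hmemp hmemq
    dsimp only at hmemp hmemq
    apply hpq
    have h1 : p.1 = q.1 := by
      by_contra hne
      have hx := hmemp p.1
      have hy := hmemq p.1
      rw [if_pos rfl] at hx
      by_cases h2 : p.1 = q.2
      · rw [if_neg hne, if_pos h2] at hy
        exact hABdisj _ hx hy
      · rw [if_neg hne, if_neg h2] at hy
        exact hADdisj _ hx hy
    have h2 : p.2 = q.2 := by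
      by_contra hne
      have hx := hmemp p.2
      have hy := hmemq p.2
      rw [if_neg (Ne.symm hp), if_pos rfl] at hx
      by_cases h3 : p.2 = q.1
      · rw [if_pos h3] at hy
        exact hABdisj _ hy hx
      · rw [if_neg h3, if_neg hne] at hy
        exact hBDdisj _ hx hy
    exact Prod.ext h1 h2
  have hunion := measure_biUnion_finset (μ := (ℙ : Measure Ω)) hdisj (fun ij _ => hFm ij)
  -- inclusion into the target event
  have hincl : (⋃ ij ∈ (Finset.univ : Finset (Fin n × Fin n)).filter (fun p => p.1 ≠ p.2),
      F ij) ⊆ {ω | ∃ i j : Fin n, i ≠ j ∧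
        IsDelaunayEdge (Set.range fun k => X k ω) (X i ω) (X j ω) ∧
        (L / (2 * Real.sqrt π)) ^ ((1 : ℝ) / 3) ≤ dist (X i ω) (X j ω)} := by
    intro ω hω
    simp only [Set.mem_iUnion] at hω
    obtain ⟨ij, hij, hωF⟩ := hω
    have hne : ij.1 ≠ ij.2 := by
      simpa using (Finset.mem_filter.mp hij).2
    rw [hFdef] at hωF
    have hmem : ∀ k, X k ω ∈ K ij k := fun k => Set.mem_iInter.mp hωF k
    have hXiA : X ij.1 ω ∈ A := by
      have h := hmem ij.1
      rw [hKdef] at h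
      dsimp only at h
      rwa [if_pos rfl] at h
    have hXjB : X ij.2 ω ∈ B := by
      have h := hmem ij.2
      rw [hKdef] at h
      dsimp only at h
      rwa [if_neg hne.symm, if_pos rfl] at h
    rw [hAdef] at hXiA
    rw [hBdef] at hXjB
    obtain ⟨⟨ha01, ha02⟩, ha11, ha12⟩ := hXiA
    obtain ⟨⟨hb01, hb02⟩, hb11, hb12⟩ := hXjB
    obtain ⟨z, s, hza, hzb, hexcl⟩ := geom_main r₀ h₁ W G hr hh0 hh1r' hWdef hGdef
      (X ij.1 ω) (X ij.2 ω) ha01 ha02 hb01 hb02 ha11 ha12 hb11 hb12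
    refine ⟨ij.1, ij.2, hne, ⟨z, s, hza, hzb, ?_⟩, ?_⟩
    · rintro p ⟨k, rfl⟩
      by_cases hk1 : k = ij.1
      · subst hk1
        rw [Metric.mem_sphere] at hza
        rw [Metric.mem_ball, not_lt, hza]
      · by_cases hk2 : k = ij.2
        · subst hk2
          rw [Metric.mem_sphere] at hzb
          rw [Metric.mem_ball, not_lt, hzb]
        · have hD := hmem k
          rw [hKdef] at hD
          dsimp only at hD
          rw [if_neg hk1, if_neg hk2] at hD
          rw [hD0def] at hD
          have hp0 : X k ω 0 < h₁ := by
            by_contra hge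
            exact hD.2 (by rw [hCdef]; exact ⟨hD.1, not_lt.mp hge⟩)
          exact hexcl _ hp0
    · have h1 : W ≤ X ij.2 ω 1 - X ij.1 ω 1 := by linarith only [ha12, hb11]
      have h2 := coord_le_dist (X ij.1 ω) (X ij.2 ω)
      have habs : X ij.2 ω 1 - X ij.1 ω 1 ≤ |X ij.1 ω 1 - X ij.2 ω 1| := by
        rw [abs_sub_comm]
        exact le_abs_self _
      calc (L / (2 * Real.sqrt π)) ^ ((1:ℝ)/3) ≤ W := hτW
        _ ≤ dist (X ij.1 ω) (X ij.2 ω) := by linarith only [h1, h2, habs]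
  -- counting
  have hcardfilter : ((Finset.univ : Finset (Fin n × Fin n)).filter
      (fun p => p.1 ≠ p.2)).card = n*n - n := by
    have h1 : (Finset.univ : Finset (Fin n × Fin n)).filter (fun p => p.1 ≠ p.2)
        = (Finset.univ : Finset (Fin n)).offDiag := by
      ext p
      simp [Finset.mem_offDiag]
    rw [h1, Finset.offDiag_card, Finset.card_univ, Fintype.card_fin]
  have hsum : ∑ ij ∈ (Finset.univ : Finset (Fin n × Fin n)).filter (fun p => p.1 ≠ p.2),
      ℙ (F ij) = (n*n - n : ℕ) * (volume A * (volume B * volume D0 ^ (n-2))) := by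
    rw [Finset.sum_congr rfl hPF, Finset.sum_const, hcardfilter, nsmul_eq_mul]
  -- real-number final inequality
  have hεα : ε/α ≤ (1-L)^(n-2) := by rw [← hexp]; exact hpow
  have hεα0 : (0:ℝ) ≤ ε/α := div_nonneg hε0.le hα0.le
  have haApos : (0:ℝ) < L/64 := by linarith only [hL0]
  have hstep1 : (L/64) * ((L/64) * (ε/α)) ≤
      ((2*G/7)*(W/4)) * (((2*G/7)*(W/4)) * (1-L)^(n-2)) := by
    have hinner : (L/64) * (ε/α) ≤ ((2*G/7)*(W/4)) * (1-L)^(n-2) :=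
      mul_le_mul haA hεα hεα0 haA0.le
    exact mul_le_mul haA hinner (mul_nonneg haApos.le hεα0) haA0.le
  have hcast : ((n*n - n : ℕ):ℝ) = (n:ℝ)*(n:ℝ) - (n:ℝ) := by
    have hle : n ≤ n*n := Nat.le_mul_of_pos_left n (by omega)
    rw [Nat.cast_sub hle]
    push_cast
    ring
  have hnn0 : (0:ℝ) ≤ (n:ℝ)*(n:ℝ) - (n:ℝ) := by
    have hprod := mul_nonneg hnpos.le (show (0:ℝ) ≤ (n:ℝ)-1 by linarith only [hn2R])
    nlinarith only [hprod]
  have hkey : 4096*α ≤ ((n:ℝ)*(n:ℝ) - (n:ℝ))*L^2 := by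
    have hL2 : (2/(n:ℝ))^2 ≤ L^2 := pow_le_pow_left₀ (by positivity) hL2n 2
    have h1 : ((n:ℝ)*(n:ℝ)-(n:ℝ))*(2/(n:ℝ))^2 ≤ ((n:ℝ)*(n:ℝ)-(n:ℝ))*L^2 :=
      mul_le_mul_of_nonneg_left hL2 hnn0
    have h2 : ((n:ℝ)*(n:ℝ)-(n:ℝ))*(2/(n:ℝ))^2 = 4 - 4/(n:ℝ) := by
      field_simp
      ring
    have h2' : 4 - 4/(n:ℝ) ≤ ((n:ℝ)*(n:ℝ)-(n:ℝ))*L^2 := by rw [← h2]; exact h1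
    have h3 : 4/(n:ℝ) ≤ 4/6 := by
      rw [div_le_div_iff₀ hnpos (by norm_num : (0:ℝ) < 6)]
      linarith only [hn6]
    linarith only [h2', h3, hαub]
  have hαne : α ≠ 0 := ne_of_gt hα0
  have hεfinal : ε ≤ ((n:ℝ)*(n:ℝ)-(n:ℝ)) * ((L/64) * ((L/64) * (ε/α))) := by
    have hrw : ((n:ℝ)*(n:ℝ)-(n:ℝ)) * ((L/64) * ((L/64) * (ε/α))) =
        (((n:ℝ)*(n:ℝ)-(n:ℝ))*L^2) * (ε/(4096*α)) := by
      field_simp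
      ring
    rw [hrw]
    have hdivpos : (0:ℝ) < ε/(4096*α) := div_pos hε0 (by linarith only [hα0])
    calc ε = (4096*α) * (ε/(4096*α)) := by
          rw [mul_comm, div_mul_cancel₀ ε (show (4096*α) ≠ 0 by
            exact ne_of_gt (by linarith only [hα0]))]
      _ ≤ (((n:ℝ)*(n:ℝ)-(n:ℝ))*L^2) * (ε/(4096*α)) :=
          mul_le_mul_of_nonneg_right hkey hdivpos.le
  have hreal : ε ≤ ((n*n - n : ℕ):ℝ) *
      (((2*G/7)*(W/4)) * (((2*G/7)*(W/4)) * (1-L)^(n-2))) := by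
    rw [hcast]
    calc ε ≤ ((n:ℝ)*(n:ℝ)-(n:ℝ)) * ((L/64) * ((L/64) * (ε/α))) := hεfinal
      _ ≤ ((n:ℝ)*(n:ℝ)-(n:ℝ)) *
          (((2*G/7)*(W/4)) * (((2*G/7)*(W/4)) * (1-L)^(n-2))) :=
        mul_le_mul_of_nonneg_left hstep1 hnn0
  -- ENNReal conversion and conclusion
  have hG70 : (0:ℝ) ≤ 2*G/7 := by linarith only [hG0]
  have hW40 : (0:ℝ) ≤ W/4 := by linarith only [hW0']
  have hconv : (n*n - n : ℕ) * (volume A * (volume B * volume D0 ^ (n-2))) =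
      ENNReal.ofReal (((n*n - n : ℕ):ℝ) *
        (((2*G/7)*(W/4)) * (((2*G/7)*(W/4)) * (1-L)^(n-2)))) := by
    rw [hvolA, hvolB, hvolD0]
    rw [← ENNReal.ofReal_mul hG70, ← ENNReal.ofReal_pow (by linarith only [h1L]),
      ← ENNReal.ofReal_mul (mul_nonneg hG70 hW40),
      ← ENNReal.ofReal_mul (mul_nonneg hG70 hW40),
      ← ENNReal.ofReal_natCast (n*n-n),
      ← ENNReal.ofReal_mul (Nat.cast_nonneg _)]
  calc ENNReal.ofReal ε
      ≤ ENNReal.ofReal (((n*n - n : ℕ):ℝ) *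
          (((2*G/7)*(W/4)) * (((2*G/7)*(W/4)) * (1-L)^(n-2)))) :=
        ENNReal.ofReal_le_ofReal hreal
    _ = (n*n - n : ℕ) * (volume A * (volume B * volume D0 ^ (n-2))) := hconv.symm
    _ = ∑ ij ∈ (Finset.univ : Finset (Fin n × Fin n)).filter (fun p => p.1 ≠ p.2),
          ℙ (F ij) := hsum.symm
    _ = ℙ (⋃ ij ∈ (Finset.univ : Finset (Fin n × Fin n)).filter (fun p => p.1 ≠ p.2),
          F ij) := hunion.symm
    _ ≤ ℙ {ω | ∃ i j : Fin n, i ≠ j ∧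
          IsDelaunayEdge (Set.range fun k => X k ω) (X i ω) (X j ω) ∧
          (L / (2 * Real.sqrt π)) ^ ((1 : ℝ) / 3) ≤ dist (X i ω) (X j ω)} :=
        measure_mono hincl
end
end

section
/- For every 0 < ρ ≤ 2/√π, the area V₂(ρ) of the circular segment of the unit disk whose base chord has length ρ satisfies ρ/2 ≥ ( V₂(ρ) / (2√π) )^{1/3}. -/
/-!
STATEMENT 17: For every `0 < ρ ≤ 2/√π`, the area `V₂(ρ)` of the circular segment
of the unit disk (closed disk in `ℝ²` of area 1, radius `1/√π`) whose base chord
has length `ρ` satisfies `ρ/2 ≥ (V₂(ρ)/(2√π))^{1/3}`.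

`V₂(ρ)` (`ballCapVol 2 (1/√π) ρ`) is the area of the (smaller) circular segment
cut off by a chord of length `ρ`, i.e. by a line at distance `√(1/π - ρ²/4)`
from the center.
-/

noncomputable section

open MeasureTheory Real

local notation "⟪" x ", " y "⟫" => @inner ℝ _ _ x y

theorem chord_ge_cbrt_segment_area
    (ρ : ℝ) (hρ0 : 0 < ρ) (hρ1 : ρ ≤ 2 / Real.sqrt π) :
    (ballCapVol 2 (1 / Real.sqrt π) ρ / (2 * Real.sqrt π)) ^ ((1 : ℝ) / 3) ≤ ρ / 2 := by
  have hπ : (0:ℝ) < Real.sqrt π := Real.sqrt_pos.mpr Real.pi_pos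
  set R : ℝ := 1 / Real.sqrt π with hRdef
  have hR : 0 < R := by positivity
  have hρ2R : ρ ≤ 2 * R := by
    have : 2 / Real.sqrt π = 2 * R := by rw [hRdef]; ring
    linarith
  have hρsq : ρ ^ 2 / 4 ≤ R ^ 2 := by nlinarith
  set h : ℝ := Real.sqrt (R ^ 2 - ρ ^ 2 / 4) with hhdef
  have hh0 : 0 ≤ h := Real.sqrt_nonneg _
  have hhR : h ≤ R := by
    rw [hhdef]
    calc Real.sqrt (R ^ 2 - ρ ^ 2 / 4) ≤ Real.sqrt (R ^ 2) :=
          Real.sqrt_le_sqrt (by nlinarith)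
      _ = R := Real.sqrt_sq hR.le
  have hlow : R - ρ ^ 2 / (4 * R) ≤ h := by
    have h1 : 0 ≤ R - ρ ^ 2 / (4 * R) := by
      rw [sub_nonneg, div_le_iff₀ (by positivity)]; nlinarith
    rw [hhdef, Real.le_sqrt h1 (by nlinarith)]
    have hkey : (ρ ^ 2 / (4 * R)) ^ 2 ≥ 0 := by positivity
    have hRne : (4 * R) ≠ 0 := by positivity
    have expand : (R - ρ ^ 2 / (4 * R)) ^ 2
        = R ^ 2 - ρ ^ 2 / 2 + (ρ ^ 2 / (4 * R)) ^ 2 := by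
      field_simp; ring
    rw [expand]
    have : (ρ ^ 2 / (4 * R)) ^ 2 ≤ (ρ ^ 2 / 4) := by
      rw [div_pow, div_le_div_iff₀ (by positivity) (by norm_num)]
      nlinarith [sq_nonneg ρ, sq_nonneg R, sq_nonneg (ρ*R)]
    linarith
  -- the bounding box (as a preimage of a pi set)
  set S : Fin 2 → Set ℝ := ![Set.Icc h R, Set.Icc (-(ρ/2)) (ρ/2)] with hS
  set cap := {p : EuclideanSpace ℝ (Fin 2) | p ∈ Metric.closedBall 0 R ∧
      Real.sqrt (R ^ 2 - ρ ^ 2 / 4) ≤ ⟪EuclideanSpace.single (0 : Fin 2) (1 : ℝ), p⟫} with hcap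
  have hsubset : cap ⊆ (MeasurableEquiv.toLp 2 (Fin 2 → ℝ)).symm ⁻¹' (Set.univ.pi S) := by
    rintro p ⟨hp1, hp2⟩
    have hnorm : ‖p‖ ≤ R := by simpa using hp1
    have hp0 : h ≤ p 0 := by
      rw [EuclideanSpace.inner_single_left] at hp2
      simpa using hp2
    have hsum : (p 0) ^ 2 + (p 1) ^ 2 ≤ R ^ 2 := by
      have h2 : Real.sqrt (∑ i, ‖p i‖ ^ 2) ≤ R := (EuclideanSpace.norm_eq p) ▸ hnorm
      have h3 : (∑ i : Fin 2, ‖p i‖ ^ 2) ≤ R ^ 2 := by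
        nlinarith [Real.sq_sqrt (by positivity : (0:ℝ) ≤ ∑ i : Fin 2, ‖p i‖ ^ 2),
          Real.sqrt_nonneg (∑ i : Fin 2, ‖p i‖ ^ 2)]
      simpa [Fin.sum_univ_two, Real.norm_eq_abs, sq_abs] using h3
    have hp1abs : |p 1| ≤ ρ / 2 := by
      have hsq : (p 1) ^ 2 ≤ (ρ/2) ^ 2 := by
        have := Real.sq_sqrt (by nlinarith : (0:ℝ) ≤ R ^ 2 - ρ ^ 2 / 4)
        nlinarith [hp0, hh0]
      calc |p 1| = Real.sqrt ((p 1) ^ 2) := (Real.sqrt_sq_eq_abs _).symm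
        _ ≤ Real.sqrt ((ρ/2) ^ 2) := Real.sqrt_le_sqrt hsq
        _ = ρ / 2 := Real.sqrt_sq (by positivity)
    intro i _
    fin_cases i
    · show p 0 ∈ S 0
      simp only [hS, Matrix.cons_val_zero]
      exact ⟨hp0, by nlinarith [sq_nonneg (p 1)]⟩
    · show p 1 ∈ S 1
      simp only [hS, Matrix.cons_val_one, Matrix.head_cons]
      exact abs_le.mp hp1abs
  have hmeas : MeasurableSet (Set.univ.pi S) :=
    MeasurableSet.univ_pi (fun i => by fin_cases i <;> exact measurableSet_Icc)
  have hvolbox : volume ((MeasurableEquiv.toLp 2 (Fin 2 → ℝ)).symm ⁻¹' (Set.univ.pi S))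
      = ENNReal.ofReal (R - h) * ENNReal.ofReal ρ := by
    rw [(EuclideanSpace.volume_preserving_symm_measurableEquiv_toLp (Fin 2)).measure_preimage
      hmeas.nullMeasurableSet]
    rw [volume_pi_pi]
    rw [Fin.prod_univ_two]
    simp only [hS, Matrix.cons_val_zero, Matrix.cons_val_one, Matrix.head_cons,
      Real.volume_Icc]
    congr 1
    congr 1
    ring
  have hVle : ballCapVol 2 (1 / Real.sqrt π) ρ ≤ (R - h) * ρ := by
    have h1 : volume cap ≤ ENNReal.ofReal (R - h) * ENNReal.ofReal ρ := by
      rw [← hvolbox]; exact measure_mono hsubset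
    have h2 : (volume cap).toReal ≤ ((ENNReal.ofReal (R - h)) * ENNReal.ofReal ρ).toReal := by
      apply ENNReal.toReal_mono _ h1
      exact ENNReal.mul_ne_top ENNReal.ofReal_ne_top ENNReal.ofReal_ne_top
    rw [ENNReal.toReal_mul, ENNReal.toReal_ofReal (by linarith), ENNReal.toReal_ofReal hρ0.le] at h2
    exact h2
  have hV0 : 0 ≤ ballCapVol 2 (1 / Real.sqrt π) ρ := ENNReal.toReal_nonneg
  -- combine: V/(2√π) ≤ (ρ/2)^3
  have hkey : ballCapVol 2 (1 / Real.sqrt π) ρ / (2 * Real.sqrt π) ≤ (ρ / 2) ^ 3 := by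
    have hRh : R - h ≤ ρ ^ 2 / (4 * R) := by linarith
    have h4R : ρ ^ 2 / (4 * R) = Real.sqrt π * ρ ^ 2 / 4 := by
      rw [hRdef]; field_simp
    have : ballCapVol 2 (1 / Real.sqrt π) ρ ≤ Real.sqrt π * ρ ^ 2 / 4 * ρ := by
      calc ballCapVol 2 (1 / Real.sqrt π) ρ ≤ (R - h) * ρ := hVle
        _ ≤ Real.sqrt π * ρ ^ 2 / 4 * ρ := by
            apply mul_le_mul_of_nonneg_right _ hρ0.le
            rw [← h4R]; exact hRh
    rw [div_le_iff₀ (by positivity)]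
    calc ballCapVol 2 (1 / Real.sqrt π) ρ ≤ Real.sqrt π * ρ ^ 2 / 4 * ρ := this
      _ = (ρ / 2) ^ 3 * (2 * Real.sqrt π) := by ring
  calc (ballCapVol 2 (1 / Real.sqrt π) ρ / (2 * Real.sqrt π)) ^ ((1:ℝ)/3)
      ≤ ((ρ / 2) ^ 3) ^ ((1:ℝ)/3) :=
        Real.rpow_le_rpow (by positivity) hkey (by norm_num)
    _ = ρ / 2 := by
        rw [← Real.rpow_natCast (ρ/2) 3, ← Real.rpow_mul (by positivity)]
        norm_num
end
end
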